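/- Bernoulli-type step (Min wins, all-pay Richman invariant): let α ∈ (0,1), S > 0, s ≥ 0, B > 0, and suppose x, y satisfy 0 ≤ x ≤ y ≤ αBs/S (with s ≤ S). If B ≥ (1+α)^((L-H)/(2S)) for reals L, H, then B + y - x ≥ (1+α)^((L + ΔL - H + s)/(2S)), where ΔL = -s + 2S(y-x)/(αB). -/

import Mathlib

/-- Bernoulli-type step (Min wins) in the all-pay Richman invariant:
if `B ≥ (1+α)^((L-H)/(2S))` and `0 ≤ x ≤ y ≤ αBs/S` with `s ≤ S`, then
`B + y - x ≥ (1+α)^((L + ΔL - H + s)/(2S))` where `ΔL = -s + 2S(y-x)/(αB)`. -/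
theorem richman_invariant_min_wins (α S s B x y L H : ℝ)
    (hα : α ∈ Set.Ioo (0:ℝ) 1) (hS : 0 < S) (hs : 0 ≤ s) (hsS : s ≤ S) (hB : 0 < B)
    (hx : 0 ≤ x) (hxy : x ≤ y) (hy : y ≤ α * B * s / S)
    (hinv : B ≥ (1 + α) ^ ((L - H) / (2 * S))) :
    B + y - x ≥ (1 + α) ^ ((L + (-s + 2 * S * (y - x) / (α * B)) - H + s) / (2 * S)) := by
  obtain ⟨hα0, hα1⟩ := hα
  have hαB : 0 < α * B := mul_pos hα0 hB
  set t : ℝ := (y - x) / (α * B) with ht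
  have ht0 : 0 ≤ t := div_nonneg (by linarith) hαB.le
  have ht1 : t ≤ 1 := by
    rw [div_le_one hαB]
    have h1 : y ≤ α * B * s / S := hy
    have h2 : α * B * s / S ≤ α * B := by
      rw [div_le_iff₀ hS]
      nlinarith
    linarith
  have hE : (L + (-s + 2 * S * (y - x) / (α * B)) - H + s) / (2 * S)
      = (L - H) / (2 * S) + t := by
    field_simp [ht]
    rw [ht]
    field_simp
    ring
  rw [hE, Real.rpow_add (by linarith : (0:ℝ) < 1 + α)]
  have h1 : (1 + α) ^ t ≤ 1 + t * α :=
    rpow_one_add_le_one_add_mul_self (by linarith) ht0 ht1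
  have h2 : (0:ℝ) ≤ (1 + α) ^ t := Real.rpow_nonneg (by linarith) t
  have h3 : (1 + α) ^ ((L - H) / (2 * S)) * (1 + α) ^ t ≤ B * (1 + t * α) :=
    mul_le_mul hinv h1 h2 hB.le
  have h4 : B * (1 + t * α) = B + y - x := by
    have : t * (α * B) = y - x := div_mul_cancel₀ _ hαB.ne'
    nlinarith [this]
  linarith
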